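/- ln 2 = Σ_{n=1}^{∞} (1/(2n)) · C(2n,n) · (1/4)^n. -/

import Mathlib

open Filter Real Finset

namespace LogTwoSeries

noncomputable def a (n : ℕ) : ℝ := ((2 * n).choose n : ℝ) / 4 ^ n

lemma a_zero : a 0 = 1 := by simp [a]

lemma a_pos (n : ℕ) : 0 < a n := by
  apply div_pos
  · exact_mod_cast Nat.choose_pos (by omega)
  · positivity

lemma a_rec (n : ℕ) : 2 * ((n : ℝ) + 1) * a (n + 1) = (2 * n + 1) * a n := by
  have h := Nat.succ_mul_centralBinom_succ n
  rw [Nat.centralBinom_eq_two_mul_choose, Nat.centralBinom_eq_two_mul_choose] at h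
  have h' : ((n : ℝ) + 1) * ((2 * (n + 1)).choose (n + 1) : ℝ)
      = 2 * (2 * n + 1) * ((2 * n).choose n : ℝ) := by exact_mod_cast h
  simp only [a]
  rw [pow_succ]
  field_simp
  linear_combination 2 * h'

lemma a_succ_le (n : ℕ) : a (n + 1) ≤ a n := by
  have h := a_rec n
  have hp := a_pos (n + 1)
  nlinarith [a_pos n]

lemma a_le_one (n : ℕ) : a n ≤ 1 := by
  induction n with
  | zero => simp [a_zero]
  | succ n ih => exact (a_succ_le n).trans ih

end LogTwoSeries

namespace LogTwoSeries

noncomputable def c : ℕ → ℝ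
  | 0 => 0
  | (n + 1) => a (n + 1) / (2 * ((n : ℝ) + 1))

lemma c_nonneg (n : ℕ) : 0 ≤ c n := by
  cases n with
  | zero => simp [c]
  | succ n => exact le_of_lt (div_pos (a_pos _) (by positivity))

lemma c_abs_le_one (n : ℕ) : |c n| ≤ 1 := by
  rw [abs_of_nonneg (c_nonneg n)]
  cases n with
  | zero => norm_num [c]
  | succ n =>
      have h1 : a (n + 1) ≤ 1 := a_le_one _
      have h2 : (1 : ℝ) ≤ 2 * ((n : ℝ) + 1) := by
        have : (0:ℝ) ≤ n := Nat.cast_nonneg n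
        linarith
      calc c (n + 1) = a (n + 1) / (2 * ((n : ℝ) + 1)) := rfl
        _ ≤ 1 / 1 := by
            apply div_le_div₀ (by norm_num) h1 (by norm_num) h2
        _ = 1 := by norm_num

lemma summable_c : Summable c := by
  apply summable_of_sum_range_le (c := 1) c_nonneg
  intro n
  cases n with
  | zero => simp
  | succ n =>
      rw [Finset.sum_range_succ']
      have hc0 : c 0 = 0 := rfl
      rw [hc0, add_zero]
      have hle : ∀ i ∈ Finset.range n, c (i + 1) ≤ a i - a (i + 1) := by
        intro i _
        have h1 : a (i + 1) ≤ a i := a_succ_le i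
        have h2 : (0:ℝ) < 2 * ((i : ℝ) + 1) := by positivity
        have h3 : c (i + 1) = a (i + 1) / (2 * ((i : ℝ) + 1)) := rfl
        have key : a i - a (i + 1) = a i / (2 * ((i : ℝ) + 1)) := by
          have := a_rec i
          field_simp
          nlinarith [this]
        rw [h3, key]
        gcongr
      calc ∑ i ∈ Finset.range n, c (i + 1) ≤ ∑ i ∈ Finset.range n, (a i - a (i + 1)) :=
            Finset.sum_le_sum hle
        _ = a 0 - a n := Finset.sum_range_sub' a n
        _ ≤ 1 := by have := a_pos n; rw [a_zero]; linarith

lemma summable_geom_aux {x : ℝ} (hx : |x| < 1) (w : ℕ → ℝ) (K : ℝ)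
    (hw : ∀ n, |w n| ≤ K * ((n : ℝ) + 1)) : Summable fun n => w n * x ^ n := by
  have h1 : Summable (fun n : ℕ => (n : ℝ) * |x| ^ n) := by
    simpa using summable_pow_mul_geometric_of_norm_lt_one 1
      (r := |x|) (by rwa [Real.norm_eq_abs, abs_abs])
  have h2 : Summable (fun n : ℕ => |x| ^ n) :=
    summable_geometric_of_lt_one (abs_nonneg x) hx
  have h3 : Summable (fun n : ℕ => K * (((n : ℝ) + 1) * |x| ^ n)) :=
    ((h1.add h2).congr (by intro n; ring)).mul_left K
  apply Summable.of_norm_bounded h3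
  intro n
  rw [norm_mul, norm_pow, Real.norm_eq_abs, Real.norm_eq_abs]
  calc |w n| * |x| ^ n ≤ (K * ((n : ℝ) + 1)) * |x| ^ n := by
        apply mul_le_mul_of_nonneg_right (hw n) (by positivity)
    _ = K * (((n : ℝ) + 1) * |x| ^ n) := by ring

lemma summable_nr {r : ℝ} (hr0 : 0 ≤ r) (hr : r < 1) :
    Summable (fun n : ℕ => (n : ℝ) * r ^ (n - 1)) := by
  rw [← summable_nat_add_iff 1]
  have h1 : Summable (fun n : ℕ => (n : ℝ) * r ^ n) := by
    simpa using summable_pow_mul_geometric_of_norm_lt_one 1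
      (r := r) (by rwa [Real.norm_eq_abs, abs_of_nonneg hr0])
  have h2 : Summable (fun n : ℕ => r ^ n) := summable_geometric_of_lt_one hr0 hr
  apply (h1.add h2).congr
  intro n
  push_cast [Nat.add_sub_cancel]
  ring

end LogTwoSeries

namespace LogTwoSeries

lemma summable_deriv_terms {x : ℝ} (hx : |x| < 1) (w : ℕ → ℝ) (hw : ∀ n, |w n| ≤ 1) :
    Summable fun n => w n * ((n : ℝ) * x ^ (n - 1)) := by
  apply Summable.of_norm_bounded (summable_nr (abs_nonneg x) hx)
  intro n
  rw [Real.norm_eq_abs, abs_mul, abs_mul, abs_pow, Nat.abs_cast]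
  calc |w n| * ((n : ℝ) * |x| ^ (n - 1)) ≤ 1 * ((n : ℝ) * |x| ^ (n - 1)) := by
        apply mul_le_mul_of_nonneg_right (hw n) (by positivity)
    _ = (n : ℝ) * |x| ^ (n - 1) := one_mul _

lemma hasDerivAt_series (w : ℕ → ℝ) (hw : ∀ n, |w n| ≤ 1) {x : ℝ} (hx : |x| < 1) :
    HasDerivAt (fun y => ∑' n : ℕ, w n * y ^ n) (∑' n : ℕ, w n * ((n : ℝ) * x ^ (n - 1))) x := by
  set r : ℝ := (1 + |x|) / 2 with hr
  have hr0 : 0 < r := by positivity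
  have hr1 : r < 1 := by rw [hr]; linarith
  have hxr : |x| < r := by rw [hr]; linarith
  apply hasDerivAt_tsum_of_isPreconnected
    (u := fun n : ℕ => (n : ℝ) * r ^ (n - 1))
    (t := Set.Ioo (-r) r) (y₀ := 0)
    (g' := fun (n : ℕ) (y : ℝ) => w n * ((n : ℝ) * y ^ (n - 1)))
  · exact summable_nr hr0.le hr1
  · exact isOpen_Ioo
  · exact (convex_Ioo _ _).isPreconnected
  · intro n y _
    exact (hasDerivAt_pow n y).const_mul (w n)
  · intro n y hy
    have hyr : |y| ≤ r := by
      rw [abs_le]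
      exact ⟨hy.1.le, hy.2.le⟩
    rw [Real.norm_eq_abs, abs_mul, abs_mul, abs_pow, Nat.abs_cast]
    calc |w n| * ((n : ℝ) * |y| ^ (n - 1)) ≤ 1 * ((n : ℝ) * r ^ (n - 1)) := by
          apply mul_le_mul (hw n)
          · apply mul_le_mul_of_nonneg_left (pow_le_pow_left₀ (abs_nonneg y) hyr _)
              (Nat.cast_nonneg n)
          · positivity
          · norm_num
      _ = (n : ℝ) * r ^ (n - 1) := one_mul _
  · exact Set.mem_Ioo.2 ⟨by linarith, hr0⟩
  · apply summable_geom_aux (x := (0:ℝ)) (by norm_num) w 1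
    intro n
    have : (0:ℝ) ≤ n := Nat.cast_nonneg n
    calc |w n| ≤ 1 := hw n
      _ ≤ 1 * ((n : ℝ) + 1) := by linarith
  · exact Set.mem_Ioo.2 ⟨neg_lt_of_abs_lt hxr, lt_of_abs_lt hxr⟩

end LogTwoSeries

namespace LogTwoSeries

lemma a_abs_le (n : ℕ) : |a n| ≤ 1 := by rw [abs_of_nonneg (a_pos n).le]; exact a_le_one n

lemma summable_h {x : ℝ} (hx : |x| < 1) : Summable fun n => a n * x ^ n :=
  summable_geom_aux hx a 1 (fun n => by
    have h3 : (0:ℝ) ≤ n := Nat.cast_nonneg n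
    have := a_abs_le n; linarith)

lemma summable_S {x : ℝ} (hx : |x| < 1) :
    Summable fun n : ℕ => (2 * (n : ℝ) + 1) * a n * x ^ n := by
  apply summable_geom_aux hx _ 2
  intro n
  have h1 := (a_pos n).le; have h2 := a_le_one n
  have h3 : (0:ℝ) ≤ n := Nat.cast_nonneg n
  rw [abs_of_nonneg (by positivity)]
  nlinarith

lemma summable_S' {x : ℝ} (hx : |x| < 1) :
    Summable fun n : ℕ => 2 * (n : ℝ) * a n * x ^ n := by
  apply summable_geom_aux hx _ 2
  intro n
  have h1 := (a_pos n).le; have h2 := a_le_one n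
  have h3 : (0:ℝ) ≤ n := Nat.cast_nonneg n
  rw [abs_of_nonneg (by positivity)]
  nlinarith

lemma summable_D {x : ℝ} (hx : |x| < 1) :
    Summable fun n => a n * ((n : ℝ) * x ^ (n - 1)) :=
  summable_deriv_terms hx a a_abs_le

lemma two_D_eq {x : ℝ} (hx : |x| < 1) :
    2 * ∑' n : ℕ, a n * ((n : ℝ) * x ^ (n - 1)) = ∑' n : ℕ, (2 * (n : ℝ) + 1) * a n * x ^ n := by
  have h1 : ∑' n : ℕ, a n * ((n : ℝ) * x ^ (n - 1))
      = ∑' n : ℕ, a (n + 1) * (((n : ℝ) + 1) * x ^ n) := by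
    rw [Summable.tsum_eq_zero_add (summable_D hx)]
    simp only [Nat.cast_zero, zero_mul, mul_zero, zero_add]
    apply tsum_congr; intro n
    push_cast [Nat.add_sub_cancel]
    ring
  rw [h1, ← tsum_mul_left]
  apply tsum_congr; intro n
  linear_combination x ^ n * (a_rec n)

lemma key_h {x : ℝ} (hx : |x| < 1) :
    2 * (1 - x) * ∑' n : ℕ, a n * ((n : ℝ) * x ^ (n - 1)) = ∑' n : ℕ, a n * x ^ n := by
  set S := ∑' n : ℕ, (2 * (n : ℝ) + 1) * a n * x ^ n with hS
  have h2D := two_D_eq hx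
  have hxS : x * S = S - ∑' n : ℕ, a n * x ^ n := by
    have hsub : S - ∑' n : ℕ, a n * x ^ n = ∑' n : ℕ, 2 * (n : ℝ) * a n * x ^ n := by
      rw [hS, ← Summable.tsum_sub (summable_S hx) (summable_h hx)]
      apply tsum_congr; intro n; ring
    have hshift : ∑' n : ℕ, 2 * (n : ℝ) * a n * x ^ n
        = ∑' n : ℕ, (2 * (n : ℝ) + 1) * a n * x ^ (n + 1) := by
      rw [Summable.tsum_eq_zero_add (summable_S' hx)]
      simp only [Nat.cast_zero, zero_mul, mul_zero, zero_add]
      apply tsum_congr; intro n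
      push_cast
      linear_combination x ^ (n + 1) * (a_rec n)
    have hxS' : x * S = ∑' n : ℕ, (2 * (n : ℝ) + 1) * a n * x ^ (n + 1) := by
      rw [hS, ← tsum_mul_left]
      apply tsum_congr; intro n; ring
    rw [hxS', hsub, hshift]
  have hfin : 2 * (1 - x) * ∑' n : ℕ, a n * ((n : ℝ) * x ^ (n - 1)) = S - x * S := by
    calc 2 * (1 - x) * ∑' n : ℕ, a n * ((n : ℝ) * x ^ (n - 1))
        = (1 - x) * (2 * ∑' n : ℕ, a n * ((n : ℝ) * x ^ (n - 1))) := by ring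
      _ = (1 - x) * S := by rw [h2D]
      _ = S - x * S := by ring
  rw [hfin, hxS]; ring

lemma h_one_le {x : ℝ} (h0 : 0 ≤ x) (hx : x < 1) : 1 ≤ ∑' n : ℕ, a n * x ^ n := by
  have h := Summable.le_tsum (summable_h (by rwa [abs_of_nonneg h0])) 0
    (fun j _ => mul_nonneg (a_pos j).le (pow_nonneg h0 j))
  simpa [a_zero] using h

lemma h_mul_sqrt {x : ℝ} (h0 : 0 ≤ x) (hx : x < 1) :
    (∑' n : ℕ, a n * x ^ n) * Real.sqrt (1 - x) = 1 := by
  set h : ℝ → ℝ := fun y => ∑' n : ℕ, a n * y ^ n with hh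
  have habs : ∀ y ∈ Set.Icc 0 x, |y| < 1 := fun y hy => by
    rw [abs_of_nonneg hy.1]; exact lt_of_le_of_lt hy.2 hx
  have hderiv : ∀ y ∈ Set.Icc (0:ℝ) x, HasDerivAt (fun z => (h z) ^ 2 * (1 - z)) 0 y := by
    intro y hy
    have hy1 : |y| < 1 := habs y hy
    have Hd := hasDerivAt_series a a_abs_le hy1
    have Hf : HasDerivAt (fun z => (h z) ^ 2 * (1 - z))
        ((2 * h y ^ 1 * (∑' n : ℕ, a n * ((n : ℝ) * y ^ (n - 1)))) * (1 - y)
          + (h y) ^ 2 * (0 - 1)) y :=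
      (Hd.pow 2).mul ((hasDerivAt_const y (1:ℝ)).sub (hasDerivAt_id y))
    convert Hf using 1
    have K := key_h hy1
    have hhy : h y = ∑' n : ℕ, a n * y ^ n := rfl
    rw [hhy]
    linear_combination (-(∑' n : ℕ, a n * y ^ n)) * K
  have hcont : ContinuousOn (fun z => (h z) ^ 2 * (1 - z)) (Set.Icc 0 x) := fun y hy =>
    ((hderiv y hy).continuousAt).continuousWithinAt
  have hconst := constant_of_has_deriv_right_zero hcont
      (fun y hy => ((hderiv y (Set.mem_Icc.2 ⟨hy.1, hy.2.le⟩)).hasDerivWithinAt)) x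
      (Set.mem_Icc.2 ⟨h0, le_refl x⟩)
  have hh0 : h 0 = 1 := by
    rw [hh]
    simp only
    rw [tsum_eq_single 0 (fun n hn => by simp [zero_pow hn])]
    simp [a_zero]
  have hsq : (h x) ^ 2 * (1 - x) = 1 := by
    rw [hconst, hh0]; norm_num
  have hpos : 1 ≤ h x := h_one_le h0 hx
  have hs : Real.sqrt (1 - x) ^ 2 = 1 - x := Real.sq_sqrt (by linarith)
  have ht : (h x * Real.sqrt (1 - x)) ^ 2 = 1 := by
    rw [mul_pow, hs]; exact hsq
  have htn : 0 ≤ h x * Real.sqrt (1 - x) := mul_nonneg (by linarith) (Real.sqrt_nonneg _)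
  have hfact : (h x * Real.sqrt (1 - x) - 1) * (h x * Real.sqrt (1 - x) + 1) = 0 := by
    linear_combination ht
  rcases mul_eq_zero.1 hfact with hcase | hcase
  · have : h x * Real.sqrt (1 - x) = 1 := by linarith
    exact this
  · linarith

end LogTwoSeries

namespace LogTwoSeries

lemma Dc_eq {y : ℝ} (hy : |y| < 1) :
    ∑' n : ℕ, c n * ((n : ℝ) * y ^ (n - 1)) = (1 / 2) * ∑' n : ℕ, a (n + 1) * y ^ n := by
  rw [Summable.tsum_eq_zero_add (summable_deriv_terms hy c c_abs_le_one)]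
  simp only [Nat.cast_zero, zero_mul, mul_zero, zero_add]
  rw [← tsum_mul_left]
  apply tsum_congr; intro n
  have hne : ((n : ℝ) + 1) ≠ 0 := by positivity
  show c (n + 1) * ((((n : ℕ) + 1 : ℕ) : ℝ) * y ^ (n + 1 - 1)) = 1 / 2 * (a (n + 1) * y ^ n)
  simp only [c, Nat.add_sub_cancel]
  push_cast
  field_simp

lemma T_rel {y : ℝ} (hy : |y| < 1) :
    1 + y * ∑' n : ℕ, a (n + 1) * y ^ n = ∑' n : ℕ, a n * y ^ n := by
  rw [Summable.tsum_eq_zero_add (summable_h hy)]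
  simp only [a_zero, pow_zero, one_mul]
  rw [← tsum_mul_left]
  congr 1
  apply tsum_congr; intro n
  ring

lemma F_eq_g {x : ℝ} (h0 : 0 ≤ x) (hx : x < 1) :
    ∑' n : ℕ, c n * x ^ n = Real.log 2 - Real.log (1 + Real.sqrt (1 - x)) := by
  set Ψ : ℝ → ℝ := fun y =>
    (∑' n : ℕ, c n * y ^ n) - (Real.log 2 - Real.log (1 + Real.sqrt (1 - y))) with hΨ
  have hderiv : ∀ y ∈ Set.Icc (0:ℝ) x, HasDerivAt Ψ 0 y := by
    intro y hy
    have hy0 : 0 ≤ y := hy.1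
    have hy1 : y < 1 := lt_of_le_of_lt hy.2 hx
    have hya : |y| < 1 := by rw [abs_of_nonneg hy0]; exact hy1
    set s := Real.sqrt (1 - y) with hs
    have hs2 : s ^ 2 = 1 - y := Real.sq_sqrt (by linarith)
    have hspos : 0 < s := Real.sqrt_pos.2 (by linarith)
    have hsd : HasDerivAt (fun z : ℝ => Real.sqrt (1 - z)) (-(1 / (2 * s))) y := by
      have h1 : HasDerivAt (fun z : ℝ => 1 - z) (-1) y := by
        exact (hasDerivAt_id y).const_sub 1
      have h2 := (Real.hasDerivAt_sqrt (by linarith : (1:ℝ) - y ≠ 0)).comp y h1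
      refine h2.congr_deriv ?_
      rw [← hs]
      ring
    have hlogd : HasDerivAt (fun z : ℝ => Real.log (1 + Real.sqrt (1 - z)))
        ((1 + s)⁻¹ * (-(1 / (2 * s)))) y := by
      have h3 : HasDerivAt (fun z : ℝ => 1 + Real.sqrt (1 - z)) (-(1 / (2 * s))) y := by
        exact hsd.const_add 1
      have h4 := (Real.hasDerivAt_log (by positivity : (1:ℝ) + s ≠ 0)).comp y h3
      exact h4
    have hgd : HasDerivAt (fun z : ℝ => Real.log 2 - Real.log (1 + Real.sqrt (1 - z)))
        (1 / (2 * s * (1 + s))) y := by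
      have h5 := (hasDerivAt_const y (Real.log 2)).sub hlogd
      refine h5.congr_deriv ?_
      have hne1 : (1 + s) ≠ 0 := by positivity
      have hne2 : s ≠ 0 := ne_of_gt hspos
      field_simp
      ring
    have hFd := hasDerivAt_series c c_abs_le_one hya
    have hval : ∑' n : ℕ, c n * ((n : ℝ) * y ^ (n - 1)) = 1 / (2 * s * (1 + s)) := by
      rw [Dc_eq hya]
      set T := ∑' n : ℕ, a (n + 1) * y ^ n with hTdef
      have hT : 1 + y * T = ∑' n : ℕ, a n * y ^ n := T_rel hya
      have hhs : (∑' n : ℕ, a n * y ^ n) * s = 1 := h_mul_sqrt hy0 hy1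
      rw [← hT] at hhs
      by_cases hy' : y = 0
      · subst hy'
        have hTv : T = a 1 := by
          rw [hTdef, tsum_eq_single 0 (fun n hn => by simp [zero_pow hn])]
          simp
        have ha1 : a 1 = 1 / 2 := by norm_num [a]
        have hs1 : s = 1 := by rw [hs]; simp
        rw [hTv, ha1, hs1]; norm_num
      · have hys : 0 < y := lt_of_le_of_ne hy0 (Ne.symm hy')
        have hsne1 : s < 1 := by nlinarith
        have h6 : y = (1 - s) * (1 + s) := by nlinarith
        have h8 : (1 - s) * (T * (s * (1 + s))) = (1 - s) * 1 := by
          linear_combination hhs - T * s * h6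
        have h7 : T * (s * (1 + s)) = 1 :=
          mul_left_cancel₀ (by intro hc; nlinarith [sub_eq_zero.1 hc]) h8
        have hne1 : (1 + s) ≠ 0 := by positivity
        have hne2 : s ≠ 0 := ne_of_gt hspos
        field_simp
        linear_combination h7
    have h9 := hFd.sub hgd
    rw [hval] at h9
    exact h9.congr_deriv (sub_self _)
  have hcont : ContinuousOn Ψ (Set.Icc 0 x) := fun y hy =>
    ((hderiv y hy).continuousAt).continuousWithinAt
  have hconst := constant_of_has_deriv_right_zero hcont
      (fun y hy => ((hderiv y (Set.mem_Icc.2 ⟨hy.1, hy.2.le⟩)).hasDerivWithinAt)) x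
      (Set.mem_Icc.2 ⟨h0, le_refl x⟩)
  have hΨ0 : Ψ 0 = 0 := by
    rw [hΨ]
    simp only
    rw [tsum_eq_single 0 (fun n hn => by simp [zero_pow hn])]
    norm_num [c]
  rw [hΨ0] at hconst
  have := sub_eq_zero.1 hconst
  exact this

end LogTwoSeries

/-- `ln 2 = Σ_{n=1}^∞ (1/(2n)) C(2n,n) (1/4)^n`. -/
theorem log_two_eq_series :
    HasSum (fun n : ℕ =>
      (1 / (2 * (n + 1) : ℝ)) * ((2 * (n + 1)).choose (n + 1) : ℝ) * (1 / 4 : ℝ) ^ (n + 1))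
      (Real.log 2) := by
  have hsum : Summable LogTwoSeries.c := LogTwoSeries.summable_c
  have habel : Filter.Tendsto (fun x : ℝ => ∑' n : ℕ, LogTwoSeries.c n * x ^ n)
      (nhdsWithin 1 (Set.Iio 1)) (nhds (∑' n, LogTwoSeries.c n)) :=
    Real.tendsto_tsum_powerSeries_nhdsWithin_lt hsum.hasSum.tendsto_sum_nat
  have hg : Filter.Tendsto (fun x : ℝ => Real.log 2 - Real.log (1 + Real.sqrt (1 - x)))
      (nhdsWithin 1 (Set.Iio 1)) (nhds (Real.log 2)) := by
    have hc : ContinuousAt (fun x : ℝ => Real.log 2 - Real.log (1 + Real.sqrt (1 - x))) 1 := by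
      apply ContinuousAt.sub continuousAt_const
      exact ContinuousAt.comp (Real.continuousAt_log (by simp))
        (continuousAt_const.add ((Real.continuous_sqrt.comp
          (continuous_const.sub continuous_id)).continuousAt))
    have hval : Real.log 2 - Real.log (1 + Real.sqrt (1 - (1:ℝ))) = Real.log 2 := by simp
    have := hc.tendsto
    rw [hval] at this
    exact this.mono_left nhdsWithin_le_nhds
  have heq : (fun x : ℝ => ∑' n : ℕ, LogTwoSeries.c n * x ^ n)
      =ᶠ[nhdsWithin 1 (Set.Iio 1)]
      (fun x : ℝ => Real.log 2 - Real.log (1 + Real.sqrt (1 - x))) := by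
    filter_upwards [Ioo_mem_nhdsLT (show (0:ℝ) < 1 by norm_num)] with x hx
    exact LogTwoSeries.F_eq_g hx.1.le hx.2
  have hL : (∑' n, LogTwoSeries.c n) = Real.log 2 :=
    tendsto_nhds_unique habel (hg.congr' heq.symm)
  have hc2 : HasSum LogTwoSeries.c (Real.log 2) := hL ▸ hsum.hasSum
  have h3 := (hasSum_nat_add_iff' 1).2 hc2
  have hc0 : ∑ i ∈ Finset.range 1, LogTwoSeries.c i = 0 := by
    simp [LogTwoSeries.c]
  rw [hc0, sub_zero] at h3
  have hfun : (fun n : ℕ =>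
      (1 / (2 * (n + 1) : ℝ)) * ((2 * (n + 1)).choose (n + 1) : ℝ) * (1 / 4 : ℝ) ^ (n + 1))
      = fun n => LogTwoSeries.c (n + 1) := by
    funext n
    show _ = LogTwoSeries.a (n + 1) / (2 * ((n : ℝ) + 1))
    simp only [LogTwoSeries.a]
    rw [div_pow, one_pow]
    push_cast
    ring
  rw [hfun]
  exact h3
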